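/- For any predictor f : 𝒳 → ℝ satisfying 0 < f(x) < 1 for every x ∈ 𝒳, the expected cross-entropy risk decomposes as R(f) = ∑_{x : p_X(x) > 0} p_X(x) · KL(η(x) ‖ f(x)) + H(Y|X), where η(x) = p_{X,Y}(x, true) / p_X(x) is the conditional probability that Y = true given X = x, and KL(a‖b) = a·log(a/b) + (1−a)·log((1−a)/(1−b)) is the Kullback–Leibler divergence between Bernoulli distributions with parameters a and b (with the convention that 0·log 0 = 0). -/

import Mathlib

open Finset

/-- Joint probability `p_{X,Y}(x,y) = ∑_{ω : X ω = x ∧ Y ω = y} P ω`. -/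
noncomputable def pJoint {Ω 𝒳 : Type*} [Fintype Ω] [DecidableEq 𝒳]
    (P : Ω → ℝ) (X : Ω → 𝒳) (Y : Ω → Bool) (x : 𝒳) (y : Bool) : ℝ :=
  ∑ ω ∈ Finset.univ.filter (fun ω => X ω = x ∧ Y ω = y), P ω

/-- Marginal probability `p_X(x) = ∑_{ω : X ω = x} P ω`. -/
noncomputable def pMarg {Ω 𝒳 : Type*} [Fintype Ω] [DecidableEq 𝒳]
    (P : Ω → ℝ) (X : Ω → 𝒳) (x : 𝒳) : ℝ :=
  ∑ ω ∈ Finset.univ.filter (fun ω => X ω = x), P ω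

/-- Conditional entropy `H(Y|X)`; terms with `p_{X,Y}(x,y) = 0` vanish since `0 · log _ = 0`. -/
noncomputable def condEnt {Ω 𝒳 : Type*} [Fintype Ω] [Fintype 𝒳] [DecidableEq 𝒳]
    (P : Ω → ℝ) (X : Ω → 𝒳) (Y : Ω → Bool) : ℝ :=
  -∑ x : 𝒳, ∑ y : Bool, pJoint P X Y x y * Real.log (pJoint P X Y x y / pMarg P X x)

/-- Binary cross-entropy loss. -/
noncomputable def ceLoss (q : ℝ) (y : Bool) : ℝ :=
  if y then -Real.log q else -Real.log (1 - q)

/-- Expected cross-entropy risk of predictor `f`. -/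
noncomputable def risk {Ω 𝒳 : Type*} [Fintype Ω]
    (P : Ω → ℝ) (X : Ω → 𝒳) (Y : Ω → Bool) (f : 𝒳 → ℝ) : ℝ :=
  ∑ ω, P ω * ceLoss (f (X ω)) (Y ω)

/-- KL divergence between Bernoulli distributions with parameters `a` and `b`;
the convention `0 · log 0 = 0` is automatic since `0 * _ = 0` in `ℝ`. -/
noncomputable def klBer (a b : ℝ) : ℝ :=
  a * Real.log (a / b) + (1 - a) * Real.log ((1 - a) / (1 - b))

lemma ptwise_kl (a b q : ℝ) (ha : 0 ≤ a) (hb : 0 ≤ b) (hq0 : 0 < q) (hq1 : q < 1) :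
    a * ceLoss q true + b * ceLoss q false =
      (if 0 < a + b then (a + b) * klBer (a / (a + b)) q else 0)
      - (a * Real.log (a / (a + b)) + b * Real.log (b / (a + b))) := by
  by_cases hm : 0 < a + b
  · have hm' : a + b ≠ 0 := hm.ne'
    have h1 : 1 - a / (a + b) = b / (a + b) := by field_simp; ring
    have hA : (a + b) * (a / (a + b)) = a := by field_simp
    have hB : (a + b) * (b / (a + b)) = b := by field_simp
    have key : ∀ c q' : ℝ, 0 ≤ c → 0 < q' →
        c * Real.log ((c / (a + b)) / q') =
          c * Real.log (c / (a + b)) - c * Real.log q' := by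
      intro c q' hc hq'
      rcases hc.lt_or_eq with hc | hc
      · rw [Real.log_div (by positivity) hq'.ne']; ring
      · simp [← hc]
    have h2 : 0 < 1 - q := by linarith
    simp only [if_pos hm, klBer, h1, mul_add, ← mul_assoc, hA, hB, ceLoss,
      if_pos, if_neg, Bool.false_eq_true, not_false_iff, ite_true, ite_false]
    rw [key a q ha hq0, key b (1 - q) hb h2]
    ring
  · have ha0 : a = 0 := by linarith
    have hb0 : b = 0 := by linarith
    simp [ha0, hb0, hm]

lemma pJoint_nonneg {Ω 𝒳 : Type*} [Fintype Ω] [DecidableEq 𝒳]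
    (P : Ω → ℝ) (hP0 : ∀ ω, 0 ≤ P ω) (X : Ω → 𝒳) (Y : Ω → Bool) (x : 𝒳) (y : Bool) :
    0 ≤ pJoint P X Y x y :=
  Finset.sum_nonneg fun ω _ => hP0 ω

lemma pMarg_eq {Ω 𝒳 : Type*} [Fintype Ω] [DecidableEq 𝒳]
    (P : Ω → ℝ) (X : Ω → 𝒳) (Y : Ω → Bool) (x : 𝒳) :
    pMarg P X x = pJoint P X Y x true + pJoint P X Y x false := by
  unfold pMarg pJoint
  rw [← Finset.sum_filter_add_sum_filter_not (Finset.univ.filter fun ω => X ω = x)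
      (fun ω => Y ω = true)]
  simp only [Finset.filter_filter]
  congr 1
  all_goals (congr 1; ext ω; simp [and_comm])

lemma risk_eq_double {Ω 𝒳 : Type*} [Fintype Ω] [Fintype 𝒳] [DecidableEq 𝒳]
    (P : Ω → ℝ) (X : Ω → 𝒳) (Y : Ω → Bool) (f : 𝒳 → ℝ) :
    risk P X Y f = ∑ x : 𝒳, ∑ y : Bool, pJoint P X Y x y * ceLoss (f x) y := by
  unfold risk pJoint
  rw [← Finset.sum_fiberwise_of_maps_to (g := fun ω => (X ω, Y ω)) (t := Finset.univ)
      (fun ω _ => Finset.mem_univ _) (fun ω => P ω * ceLoss (f (X ω)) (Y ω))]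
  rw [Fintype.sum_prod_type]
  refine Finset.sum_congr rfl fun x _ => Finset.sum_congr rfl fun y _ => ?_
  rw [Finset.sum_mul]
  refine Finset.sum_congr ?_ fun ω hω => ?_
  · ext ω; simp [Prod.ext_iff]
  · simp only [Finset.mem_filter] at hω
    rw [hω.2.1, hω.2.2]

/-- the expected cross-entropy risk decomposes as
`R(f) = ∑_{x : p_X(x) > 0} p_X(x) · KL(η(x) ‖ f(x)) + H(Y|X)`, where
`η(x) = p_{X,Y}(x, true) / p_X(x)`. -/
theorem risk_eq_kl_add_condEnt {Ω 𝒳 : Type*} [Fintype Ω] [Nonempty Ω]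
    [Fintype 𝒳] [DecidableEq 𝒳]
    (P : Ω → ℝ) (hP0 : ∀ ω, 0 ≤ P ω) (hP1 : ∑ ω, P ω = 1)
    (X : Ω → 𝒳) (Y : Ω → Bool)
    (f : 𝒳 → ℝ) (hf : ∀ x, 0 < f x ∧ f x < 1) :
    risk P X Y f =
      (∑ x ∈ Finset.univ.filter (fun x => 0 < pMarg P X x),
        pMarg P X x * klBer (pJoint P X Y x true / pMarg P X x) (f x)) +
      condEnt P X Y := by
  rw [risk_eq_double]
  have hstep : ∀ x : 𝒳,
      ∑ y : Bool, pJoint P X Y x y * ceLoss (f x) y =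
        (if 0 < pMarg P X x then
            pMarg P X x * klBer (pJoint P X Y x true / pMarg P X x) (f x)
          else 0)
        - ∑ y : Bool, pJoint P X Y x y * Real.log (pJoint P X Y x y / pMarg P X x) := by
    intro x
    have hm := pMarg_eq P X Y x
    rw [Fintype.sum_bool, Fintype.sum_bool, hm,
      ptwise_kl (pJoint P X Y x true) (pJoint P X Y x false) (f x)
        (pJoint_nonneg P hP0 X Y x true) (pJoint_nonneg P hP0 X Y x false)
        (hf x).1 (hf x).2]
    try ring
  simp only [hstep, Finset.sum_sub_distrib]
  rw [← Finset.sum_filter]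
  unfold condEnt
  ring
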